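/- The one-dimensional pre-wavelets of distinct levels are L²-orthogonal: if t ≠ t', then ∫₀¹ φ_{t,i}(x) φ_{t',i'}(x) dx = 0 for all i ∈ Ξ_t and i' ∈ Ξ_{t'}. -/

import Mathlib

open MeasureTheory intervalIntegral

/-- Hat function of level `t` at node `2^{-(t+1)} i`. -/
noncomputable def hat (t i : ℕ) (x : ℝ) : ℝ :=
  max 0 (1 - |x * 2 ^ (t + 1) - (i : ℝ)|)

/-- Index set `I_t = {1,…,2^{t+1}-1}`. -/
def Idx (t : ℕ) : Finset ℕ := Finset.Icc 1 (2 ^ (t + 1) - 1)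

/-- Hierarchical complement index set `Ξ_t` (odd indices for `t ≥ 1`, `{1}` for `t = 0`). -/
def Xi (t : ℕ) : Finset ℕ := if t = 0 then {1} else (Idx t).filter (fun i => Odd i)

/-- One-dimensional pre-wavelet `φ_{t,i}` with boundary modification. -/
noncomputable def prew (t i : ℕ) (x : ℝ) : ℝ :=
  if t = 0 then hat 0 1 x
  else if i = 1 then 9/10 * hat t 1 x - 3/5 * hat t 2 x + 1/10 * hat t 3 x
  else if i = 2 ^ (t + 1) - 1 then
    9/10 * hat t i x - 3/5 * hat t (i-1) x + 1/10 * hat t (i-2) x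
  else hat t i x - 3/5 * (hat t (i+1) x + hat t (i-1) x)
    + 1/10 * (hat t (i+2) x + hat t (i-2) x)

/-! ### Auxiliary development -/

noncomputable def tri (y : ℝ) : ℝ := max 0 (1 - |y|)

lemma hat_eq_tri (t i : ℕ) (x : ℝ) : hat t i x = tri (x * 2 ^ (t + 1) - i) := rfl

lemma tri_cont : Continuous tri :=
  continuous_const.max ((continuous_const.sub continuous_abs))

lemma hat_cont (t i : ℕ) : Continuous (hat t i) :=
  continuous_const.max (continuous_const.sub
    (((continuous_id.mul continuous_const).sub continuous_const).abs))

lemma prew_cont (t i : ℕ) : Continuous (prew t i) := by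
  unfold prew; split_ifs
  · exact hat_cont 0 1
  · exact (((continuous_const.mul (hat_cont t 1)).sub
      (continuous_const.mul (hat_cont t 2))).add (continuous_const.mul (hat_cont t 3)))
  · exact (((continuous_const.mul (hat_cont t i)).sub
      (continuous_const.mul (hat_cont t (i-1)))).add (continuous_const.mul (hat_cont t (i-2))))
  · exact (((hat_cont t i).sub
      (continuous_const.mul ((hat_cont t (i+1)).add (hat_cont t (i-1))))).add
      (continuous_const.mul ((hat_cont t (i+2)).add (hat_cont t (i-2)))))

lemma tri_zero {y : ℝ} (h : 1 ≤ |y|) : tri y = 0 := by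
  unfold tri; rw [max_eq_left]; linarith

lemma tri_of {y : ℝ} (h : |y| ≤ 1) : tri y = 1 - |y| := by
  unfold tri; rw [max_eq_right]; linarith

lemma tri_ref (y : ℝ) :
    tri y = 1/2 * tri (2*y+1) + tri (2*y) + 1/2 * tri (2*y-1) := by
  rcases le_total y (-1) with h|h
  · rw [tri_zero (le_abs.mpr (.inr (by linarith))),
        tri_zero (le_abs.mpr (.inr (by linarith))),
        tri_zero (le_abs.mpr (.inr (by linarith))),
        tri_zero (le_abs.mpr (.inr (by linarith)))]
    ring
  rcases le_total y (-(1/2)) with h2|h2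
  · rw [tri_of (abs_le.mpr ⟨by linarith, by linarith⟩),
        tri_of (abs_le.mpr ⟨by linarith, by linarith⟩),
        tri_zero (le_abs.mpr (.inr (by linarith))),
        tri_zero (le_abs.mpr (.inr (by linarith))),
        abs_of_nonpos (by linarith), abs_of_nonpos (by linarith)]
    ring
  rcases le_total y 0 with h3|h3
  · rw [tri_of (abs_le.mpr ⟨by linarith, by linarith⟩),
        tri_of (abs_le.mpr ⟨by linarith, by linarith⟩),
        tri_of (abs_le.mpr ⟨by linarith, by linarith⟩),
        tri_zero (le_abs.mpr (.inr (by linarith))),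
        abs_of_nonpos (by linarith), abs_of_nonneg (by linarith),
        abs_of_nonpos (by linarith)]
    ring
  rcases le_total y (1/2) with h4|h4
  · rw [tri_of (abs_le.mpr ⟨by linarith, by linarith⟩),
        tri_zero (le_abs.mpr (.inl (by linarith))),
        tri_of (abs_le.mpr ⟨by linarith, by linarith⟩),
        tri_of (abs_le.mpr ⟨by linarith, by linarith⟩),
        abs_of_nonneg (by linarith), abs_of_nonneg (by linarith),
        abs_of_nonpos (by linarith)]
    ring
  rcases le_total y 1 with h5|h5
  · rw [tri_of (abs_le.mpr ⟨by linarith, by linarith⟩),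
        tri_zero (le_abs.mpr (.inl (by linarith))),
        tri_zero (le_abs.mpr (.inl (by linarith))),
        tri_of (abs_le.mpr ⟨by linarith, by linarith⟩),
        abs_of_nonneg (by linarith), abs_of_nonneg (by linarith)]
    ring
  · rw [tri_zero (le_abs.mpr (.inl (by linarith))),
        tri_zero (le_abs.mpr (.inl (by linarith))),
        tri_zero (le_abs.mpr (.inl (by linarith))),
        tri_zero (le_abs.mpr (.inl (by linarith)))]
    ring

lemma hat_ref (s j : ℕ) (x : ℝ) :
    hat s (j+1) x = 1/2 * hat (s+1) (2*j+1) x + hat (s+1) (2*j+2) x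
      + 1/2 * hat (s+1) (2*j+3) x := by
  have e0 : hat s (j+1) x = tri (x * 2^(s+1) - ((j:ℝ)+1)) := by
    rw [hat_eq_tri]; norm_num
  have e1 : 2*(x * 2^(s+1) - ((j:ℝ)+1))+1 = x * 2^(s+1+1) - ((2*j+1 : ℕ):ℝ) := by
    push_cast; ring
  have e2 : 2*(x * 2^(s+1) - ((j:ℝ)+1)) = x * 2^(s+1+1) - ((2*j+2 : ℕ):ℝ) := by
    push_cast; ring
  have e3 : 2*(x * 2^(s+1) - ((j:ℝ)+1))-1 = x * 2^(s+1+1) - ((2*j+3 : ℕ):ℝ) := by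
    push_cast; ring
  rw [e0, tri_ref, e1, e3, e2]
  rfl

lemma hat_ii (t a b : ℕ) :
    IntervalIntegrable (fun x => hat t a x * hat t b x) volume 0 1 :=
  ((hat_cont t a).mul (hat_cont t b)).intervalIntegrable _ _

lemma ph_ii (t i s k : ℕ) :
    IntervalIntegrable (fun x => prew t i x * hat s k x) volume 0 1 :=
  ((prew_cont t i).mul (hat_cont s k)).intervalIntegrable _ _

lemma hat_ip_sub (t a b : ℕ) :
    ∫ x in (0:ℝ)..1, hat t a x * hat t b x
      = ((2:ℝ)^(t+1))⁻¹ • ∫ u in (0:ℝ)..((2:ℝ)^(t+1)), tri (u - a) * tri (u - b) := by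
  have h := integral_comp_mul_right (a := (0:ℝ)) (b := 1)
    (fun u => tri (u - a) * tri (u - b)) (c := (2:ℝ)^(t+1)) (by positivity)
  simp only [one_mul, zero_mul] at h
  exact h

lemma cast_le_pow {a t : ℕ} (h : a ≤ 2^(t+1) - 1) : (a:ℝ) + 1 ≤ 2^(t+1) := by
  have hp : 1 ≤ 2^(t+1) := Nat.one_le_two_pow
  have : a + 1 ≤ 2^(t+1) := by omega
  calc (a:ℝ)+1 = ((a+1 : ℕ):ℝ) := by push_cast; ring
  _ ≤ ((2^(t+1):ℕ):ℝ) := by exact_mod_cast this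
  _ = 2^(t+1) := by push_cast; ring

lemma hat_ip_self (t a : ℕ) (h1 : 1 ≤ a) (h2 : a ≤ 2^(t+1) - 1) :
    ∫ x in (0:ℝ)..1, hat t a x * hat t a x = (2/3) / 2^(t+1) := by
  rw [hat_ip_sub]
  have hN : ((a:ℝ)+1) ≤ 2^(t+1) := cast_le_pow h2
  have ha1 : (1:ℝ) ≤ (a:ℝ) := by exact_mod_cast h1
  set N : ℝ := 2^(t+1) with hNdef
  set A : ℝ := (a:ℝ) with hAdef
  have c : Continuous (fun u:ℝ => tri (u - A) * tri (u - A)) :=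
    (tri_cont.comp (continuous_id.sub continuous_const)).mul
    (tri_cont.comp (continuous_id.sub continuous_const))
  have I : ∀ p q : ℝ, IntervalIntegrable (fun u => tri (u - A) * tri (u - A)) volume p q :=
    fun p q => c.intervalIntegrable p q
  rw [← integral_add_adjacent_intervals (I 0 (A-1)) (I (A-1) N),
      ← integral_add_adjacent_intervals (I (A-1) A) (I A N),
      ← integral_add_adjacent_intervals (I A (A+1)) (I (A+1) N)]
  have s1 : ∫ u in (0:ℝ)..(A-1), tri (u-A) * tri (u-A) = 0 := by
    rw [integral_congr (g := fun _ => (0:ℝ))]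
    · simp
    · intro u hu
      rw [Set.uIcc_of_le (by linarith)] at hu
      have h' := hu.2
      show tri (u-A) * tri (u-A) = 0
      rw [tri_zero (le_abs.mpr (.inr (by simp only [neg_sub]; linarith)))]
      ring
  have s2 : ∫ u in (A+1)..N, tri (u-A) * tri (u-A) = 0 := by
    rw [integral_congr (g := fun _ => (0:ℝ))]
    · simp
    · intro u hu
      rw [Set.uIcc_of_le (by linarith)] at hu
      have h' := hu.1
      show tri (u-A) * tri (u-A) = 0
      rw [tri_zero (le_abs.mpr (.inl (by linarith)))]
      ring
  have m1 : ∫ u in (A-1)..A, tri (u-A) * tri (u-A) = 1/3 := by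
    rw [integral_congr (g := fun u => (u - (A-1))^2)]
    · rw [integral_comp_sub_right (fun y => y^2) (A-1)]
      norm_num
    · intro u hu
      rw [Set.uIcc_of_le (by linarith)] at hu
      obtain ⟨hu1, hu2⟩ := hu
      show tri (u-A) * tri (u-A) = (u - (A-1))^2
      rw [tri_of (abs_le.mpr ⟨by linarith, by linarith⟩), abs_of_nonpos (by linarith)]
      ring
  have m2 : ∫ u in A..(A+1), tri (u-A) * tri (u-A) = 1/3 := by
    rw [integral_congr (g := fun u => ((A+1) - u)^2)]
    · rw [integral_comp_sub_left (fun y => y^2) (A+1)]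
      norm_num
    · intro u hu
      rw [Set.uIcc_of_le (by linarith)] at hu
      obtain ⟨hu1, hu2⟩ := hu
      show tri (u-A) * tri (u-A) = ((A+1) - u)^2
      rw [tri_of (abs_le.mpr ⟨by linarith, by linarith⟩), abs_of_nonneg (by linarith)]
      ring
  rw [s1, s2, m1, m2, smul_eq_mul]
  ring

lemma hat_ip_adjacent (t a : ℕ) (h1 : 1 ≤ a) (h2 : a + 1 ≤ 2^(t+1) - 1) :
    ∫ x in (0:ℝ)..1, hat t a x * hat t (a+1) x = (1/6) / 2^(t+1) := by
  rw [hat_ip_sub]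
  have hN : ((a:ℝ)+1)+1 ≤ 2^(t+1) := by
    have := cast_le_pow h2; push_cast at this ⊢; linarith
  have ha1 : (1:ℝ) ≤ (a:ℝ) := by exact_mod_cast h1
  have hcast : ((a+1 : ℕ):ℝ) = (a:ℝ) + 1 := by push_cast; ring
  rw [hcast]
  set N : ℝ := 2^(t+1) with hNdef
  set A : ℝ := (a:ℝ) with hAdef
  have c : Continuous (fun u:ℝ => tri (u - A) * tri (u - (A+1))) :=
    (tri_cont.comp (continuous_id.sub continuous_const)).mul
    (tri_cont.comp (continuous_id.sub continuous_const))
  have I : ∀ p q : ℝ, IntervalIntegrable (fun u => tri (u - A) * tri (u - (A+1))) volume p q :=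
    fun p q => c.intervalIntegrable p q
  rw [← integral_add_adjacent_intervals (I 0 A) (I A N),
      ← integral_add_adjacent_intervals (I A (A+1)) (I (A+1) N)]
  have s1 : ∫ u in (0:ℝ)..A, tri (u-A) * tri (u-(A+1)) = 0 := by
    rw [integral_congr (g := fun _ => (0:ℝ))]
    · simp
    · intro u hu
      rw [Set.uIcc_of_le (by linarith)] at hu
      have h' := hu.2
      show tri (u-A) * tri (u-(A+1)) = 0
      rw [tri_zero (y := u - (A+1)) (le_abs.mpr (.inr (by simp only [neg_sub]; linarith)))]
      ring
  have s2 : ∫ u in (A+1)..N, tri (u-A) * tri (u-(A+1)) = 0 := by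
    rw [integral_congr (g := fun _ => (0:ℝ))]
    · simp
    · intro u hu
      rw [Set.uIcc_of_le (by linarith)] at hu
      have h' := hu.1
      show tri (u-A) * tri (u-(A+1)) = 0
      rw [tri_zero (y := u - A) (le_abs.mpr (.inl (by linarith)))]
      ring
  have m1 : ∫ u in A..(A+1), tri (u-A) * tri (u-(A+1)) = 1/6 := by
    rw [integral_congr (g := fun u => (1 - (u - A)) * (u - A))]
    · rw [integral_comp_sub_right (fun y => (1-y)*y) A]
      have e : ∀ y : ℝ, (1-y)*y = y - y^2 := fun y => by ring
      simp only [e, sub_self, add_sub_cancel_left]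
      rw [integral_sub (continuous_id'.intervalIntegrable _ _)
        ((continuous_pow 2).intervalIntegrable _ _), integral_id]
      norm_num
    · intro u hu
      rw [Set.uIcc_of_le (by linarith)] at hu
      obtain ⟨hu1, hu2⟩ := hu
      show tri (u-A) * tri (u-(A+1)) = (1 - (u - A)) * (u - A)
      rw [tri_of (y := u - A) (abs_le.mpr ⟨by linarith, by linarith⟩),
          tri_of (y := u - (A+1)) (abs_le.mpr ⟨by linarith, by linarith⟩),
          abs_of_nonneg (by linarith), abs_of_nonpos (by linarith)]
      ring
  rw [s1, s2, m1, smul_eq_mul]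
  ring

lemma hat_ip_far (t a b : ℕ) (h : a + 2 ≤ b) :
    ∫ x in (0:ℝ)..1, hat t a x * hat t b x = 0 := by
  have hz : ∀ x:ℝ, hat t a x * hat t b x = 0 := by
    intro x
    rcases le_or_gt 1 |x * 2^(t+1) - (a:ℝ)| with h1|h1
    · rw [hat_eq_tri, tri_zero h1, zero_mul]
    · have hab : (a:ℝ) + 2 ≤ (b:ℝ) := by exact_mod_cast h
      have h2 : 1 ≤ |x * 2^(t+1) - (b:ℝ)| := by
        have t1 : |(a:ℝ) - b| ≤ |(a:ℝ) - (x*2^(t+1))| + |x*2^(t+1) - b| := abs_sub_le _ _ _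
        rw [abs_sub_comm (a:ℝ) (x*2^(t+1))] at t1
        have t2 : |(a:ℝ) - b| = (b:ℝ) - a := by rw [abs_of_nonpos (by linarith)]; ring
        rw [t2] at t1; linarith
      rw [hat_eq_tri t b, tri_zero h2, mul_zero]
  simp only [hz]
  simp

lemma ip_comm (f g : ℝ → ℝ) :
    ∫ x in (0:ℝ)..1, f x * g x = ∫ x in (0:ℝ)..1, g x * f x := by
  simp only [mul_comm]

lemma ip_eq (t a b : ℕ) (h : a = b) (h1 : 1 ≤ a) (h2 : a ≤ 2^(t+1)-1) :
    ∫ x in (0:ℝ)..1, hat t a x * hat t b x = (2/3) / 2^(t+1) := by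
  subst h; exact hat_ip_self t a h1 h2

lemma ip_adj (t a b : ℕ) (h : a + 1 = b ∨ b + 1 = a)
    (ha1 : 1 ≤ a) (ha2 : a ≤ 2^(t+1)-1) (hb1 : 1 ≤ b) (hb2 : b ≤ 2^(t+1)-1) :
    ∫ x in (0:ℝ)..1, hat t a x * hat t b x = (1/6) / 2^(t+1) := by
  rcases h with h|h
  · subst h; exact hat_ip_adjacent t a ha1 hb2
  · subst h; rw [ip_comm]; exact hat_ip_adjacent t b hb1 ha2

lemma ip_far (t a b : ℕ) (h : a + 2 ≤ b ∨ b + 2 ≤ a) :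
    ∫ x in (0:ℝ)..1, hat t a x * hat t b x = 0 := by
  rcases h with h|h
  · exact hat_ip_far t a b h
  · rw [ip_comm]; exact hat_ip_far t b a h

/-! ### Inner products of pre-wavelets with same-level hats -/

lemma prew_hat_mid (t i k : ℕ) (ht : t ≠ 0) (hi1 : i ≠ 1) (hiM : i ≠ 2^(t+1)-1)
    (hi3 : 3 ≤ i) (hiM2 : i + 2 ≤ 2^(t+1)-1) (hk1 : 1 ≤ k) (hk2 : k ≤ 2^(t+1)-1) :
    ∫ x in (0:ℝ)..1, prew t i x * hat t k x
      = (if k = i then 7/15 else if k + 1 = i ∨ i + 1 = k then -(13/60)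
         else if k + 2 = i ∨ i + 2 = k then -(1/30)
         else if k + 3 = i ∨ i + 3 = k then 1/60 else 0) / 2^(t+1) := by
  have e : ∀ x, prew t i x * hat t k x
      = hat t i x * hat t k x
        - 3/5 * (hat t (i+1) x * hat t k x) - 3/5 * (hat t (i-1) x * hat t k x)
        + 1/10 * (hat t (i+2) x * hat t k x) + 1/10 * (hat t (i-2) x * hat t k x) := by
    intro x
    unfold prew
    rw [if_neg ht, if_neg hi1, if_neg hiM]
    ring
  simp only [e]
  have i1 := hat_ii t i k
  have i2 := (hat_ii t (i+1) k).const_mul (3/5 : ℝ)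
  have i3 := (hat_ii t (i-1) k).const_mul (3/5 : ℝ)
  have i4 := (hat_ii t (i+2) k).const_mul (1/10 : ℝ)
  have i5 := (hat_ii t (i-2) k).const_mul (1/10 : ℝ)
  rw [integral_add ((((i1.sub i2).sub i3).add i4)) i5,
      integral_add (((i1.sub i2).sub i3)) i4,
      integral_sub (i1.sub i2) i3,
      integral_sub i1 i2]
  simp only [intervalIntegral.integral_const_mul]
  have hM : 1 ≤ 2^(t+1) := Nat.one_le_two_pow
  have hc : k + 4 ≤ i ∨ k + 3 = i ∨ k + 2 = i ∨ k + 1 = i ∨ k = i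
      ∨ i + 1 = k ∨ i + 2 = k ∨ i + 3 = k ∨ i + 4 ≤ k := by omega
  rcases hc with hc|hc|hc|hc|hc|hc|hc|hc|hc
  · rw [ip_far t i k (by omega), ip_far t (i+1) k (by omega), ip_far t (i-1) k (by omega),
        ip_far t (i+2) k (by omega), ip_far t (i-2) k (by omega),
        if_neg (show ¬(k = i) by omega),
        if_neg (show ¬(k + 1 = i ∨ i + 1 = k) by omega),
        if_neg (show ¬(k + 2 = i ∨ i + 2 = k) by omega),
        if_neg (show ¬(k + 3 = i ∨ i + 3 = k) by omega)]
    ring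
  · rw [ip_far t i k (by omega), ip_far t (i+1) k (by omega), ip_far t (i-1) k (by omega),
        ip_far t (i+2) k (by omega),
        ip_adj t (i-2) k (by omega) (by omega) (by omega) hk1 hk2,
        if_neg (show ¬(k = i) by omega),
        if_neg (show ¬(k + 1 = i ∨ i + 1 = k) by omega),
        if_neg (show ¬(k + 2 = i ∨ i + 2 = k) by omega),
        if_pos (show k + 3 = i ∨ i + 3 = k from Or.inl hc)]
    ring
  · rw [ip_far t i k (by omega), ip_far t (i+1) k (by omega),
        ip_adj t (i-1) k (by omega) (by omega) (by omega) hk1 hk2,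
        ip_far t (i+2) k (by omega),
        ip_eq t (i-2) k (by omega) (by omega) (by omega),
        if_neg (show ¬(k = i) by omega),
        if_neg (show ¬(k + 1 = i ∨ i + 1 = k) by omega),
        if_pos (show k + 2 = i ∨ i + 2 = k from Or.inl hc)]
    ring
  · rw [ip_adj t i k (by omega) (by omega) (by omega) hk1 hk2,
        ip_far t (i+1) k (by omega),
        ip_eq t (i-1) k (by omega) (by omega) (by omega),
        ip_far t (i+2) k (by omega),
        ip_adj t (i-2) k (by omega) (by omega) (by omega) hk1 hk2,
        if_neg (show ¬(k = i) by omega),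
        if_pos (show k + 1 = i ∨ i + 1 = k from Or.inl hc)]
    ring
  · rw [ip_eq t i k (by omega) (by omega) (by omega),
        ip_adj t (i+1) k (by omega) (by omega) (by omega) hk1 hk2,
        ip_adj t (i-1) k (by omega) (by omega) (by omega) hk1 hk2,
        ip_far t (i+2) k (by omega),
        ip_far t (i-2) k (by omega),
        if_pos hc]
    ring
  · rw [ip_adj t i k (by omega) (by omega) (by omega) hk1 hk2,
        ip_eq t (i+1) k (by omega) (by omega) (by omega),
        ip_far t (i-1) k (by omega),
        ip_adj t (i+2) k (by omega) (by omega) (by omega) hk1 hk2,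
        ip_far t (i-2) k (by omega),
        if_neg (show ¬(k = i) by omega),
        if_pos (show k + 1 = i ∨ i + 1 = k from Or.inr hc)]
    ring
  · rw [ip_far t i k (by omega),
        ip_adj t (i+1) k (by omega) (by omega) (by omega) hk1 hk2,
        ip_far t (i-1) k (by omega),
        ip_eq t (i+2) k (by omega) (by omega) (by omega),
        ip_far t (i-2) k (by omega),
        if_neg (show ¬(k = i) by omega),
        if_neg (show ¬(k + 1 = i ∨ i + 1 = k) by omega),
        if_pos (show k + 2 = i ∨ i + 2 = k from Or.inr hc)]
    ring
  · rw [ip_far t i k (by omega),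
        ip_far t (i+1) k (by omega),
        ip_far t (i-1) k (by omega),
        ip_adj t (i+2) k (by omega) (by omega) (by omega) hk1 hk2,
        ip_far t (i-2) k (by omega),
        if_neg (show ¬(k = i) by omega),
        if_neg (show ¬(k + 1 = i ∨ i + 1 = k) by omega),
        if_neg (show ¬(k + 2 = i ∨ i + 2 = k) by omega),
        if_pos (show k + 3 = i ∨ i + 3 = k from Or.inr hc)]
    ring
  · rw [ip_far t i k (by omega), ip_far t (i+1) k (by omega), ip_far t (i-1) k (by omega),
        ip_far t (i+2) k (by omega), ip_far t (i-2) k (by omega),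
        if_neg (show ¬(k = i) by omega),
        if_neg (show ¬(k + 1 = i ∨ i + 1 = k) by omega),
        if_neg (show ¬(k + 2 = i ∨ i + 2 = k) by omega),
        if_neg (show ¬(k + 3 = i ∨ i + 3 = k) by omega)]
    ring

lemma prew_hat_left (t k : ℕ) (ht : t ≠ 0) (hk1 : 1 ≤ k) (hk2 : k ≤ 2^(t+1)-1) :
    ∫ x in (0:ℝ)..1, prew t 1 x * hat t k x
      = (if k = 1 then 1/2 else if k = 2 then -(7/30)
         else if k = 3 then -(1/30) else if k = 4 then 1/60 else 0) / 2^(t+1) := by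
  have hM4 : 4 ≤ 2^(t+1) := by
    calc 4 = 2^2 := rfl
    _ ≤ 2^(t+1) := Nat.pow_le_pow_right (by norm_num) (by omega)
  have e : ∀ x, prew t 1 x * hat t k x
      = 9/10 * (hat t 1 x * hat t k x) - 3/5 * (hat t 2 x * hat t k x)
        + 1/10 * (hat t 3 x * hat t k x) := by
    intro x
    unfold prew
    rw [if_neg ht, if_pos rfl]
    ring
  simp only [e]
  have i1 := (hat_ii t 1 k).const_mul (9/10 : ℝ)
  have i2 := (hat_ii t 2 k).const_mul (3/5 : ℝ)
  have i3 := (hat_ii t 3 k).const_mul (1/10 : ℝ)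
  rw [integral_add (i1.sub i2) i3, integral_sub i1 i2]
  simp only [intervalIntegral.integral_const_mul]
  have hc : k = 1 ∨ k = 2 ∨ k = 3 ∨ k = 4 ∨ 5 ≤ k := by omega
  rcases hc with hc|hc|hc|hc|hc
  · rw [ip_eq t 1 k (by omega) (by omega) (by omega),
        ip_adj t 2 k (by omega) (by omega) (by omega) hk1 hk2,
        ip_far t 3 k (by omega),
        if_pos hc]
    ring
  · rw [ip_adj t 1 k (by omega) (by omega) (by omega) hk1 hk2,
        ip_eq t 2 k (by omega) (by omega) (by omega),
        ip_adj t 3 k (by omega) (by omega) (by omega) hk1 hk2,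
        if_neg (show ¬(k = 1) by omega), if_pos hc]
    ring
  · rw [ip_far t 1 k (by omega),
        ip_adj t 2 k (by omega) (by omega) (by omega) hk1 hk2,
        ip_eq t 3 k (by omega) (by omega) (by omega),
        if_neg (show ¬(k = 1) by omega), if_neg (show ¬(k = 2) by omega), if_pos hc]
    ring
  · rw [ip_far t 1 k (by omega), ip_far t 2 k (by omega),
        ip_adj t 3 k (by omega) (by omega) (by omega) hk1 hk2,
        if_neg (show ¬(k = 1) by omega), if_neg (show ¬(k = 2) by omega),
        if_neg (show ¬(k = 3) by omega), if_pos hc]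
    ring
  · rw [ip_far t 1 k (by omega), ip_far t 2 k (by omega), ip_far t 3 k (by omega),
        if_neg (show ¬(k = 1) by omega), if_neg (show ¬(k = 2) by omega),
        if_neg (show ¬(k = 3) by omega), if_neg (show ¬(k = 4) by omega)]
    ring

lemma prew_hat_right (t k : ℕ) (ht : t ≠ 0) (hk1 : 1 ≤ k) (hk2 : k ≤ 2^(t+1)-1) :
    ∫ x in (0:ℝ)..1, prew t (2^(t+1)-1) x * hat t k x
      = (if k = 2^(t+1)-1 then 1/2 else if k + 1 = 2^(t+1)-1 then -(7/30)
         else if k + 2 = 2^(t+1)-1 then -(1/30)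
         else if k + 3 = 2^(t+1)-1 then 1/60 else 0) / 2^(t+1) := by
  have hM4 : 4 ≤ 2^(t+1) := by
    calc 4 = 2^2 := rfl
    _ ≤ 2^(t+1) := Nat.pow_le_pow_right (by norm_num) (by omega)
  set M := 2^(t+1)-1 with hMdef
  have hM3 : 3 ≤ M := by omega
  have e : ∀ x, prew t M x * hat t k x
      = 9/10 * (hat t M x * hat t k x) - 3/5 * (hat t (M-1) x * hat t k x)
        + 1/10 * (hat t (M-2) x * hat t k x) := by
    intro x
    unfold prew
    rw [if_neg ht, if_neg (show ¬(M = 1) by omega), if_pos rfl]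
    ring
  simp only [e]
  have i1 := (hat_ii t M k).const_mul (9/10 : ℝ)
  have i2 := (hat_ii t (M-1) k).const_mul (3/5 : ℝ)
  have i3 := (hat_ii t (M-2) k).const_mul (1/10 : ℝ)
  rw [integral_add (i1.sub i2) i3, integral_sub i1 i2]
  simp only [intervalIntegral.integral_const_mul]
  have hc : k = M ∨ k + 1 = M ∨ k + 2 = M ∨ k + 3 = M ∨ k + 4 ≤ M := by omega
  rcases hc with hc|hc|hc|hc|hc
  · rw [ip_eq t M k (by omega) (by omega) (by omega),
        ip_adj t (M-1) k (by omega) (by omega) (by omega) hk1 hk2,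
        ip_far t (M-2) k (by omega),
        if_pos hc]
    ring
  · rw [ip_adj t M k (by omega) (by omega) (by omega) hk1 hk2,
        ip_eq t (M-1) k (by omega) (by omega) (by omega),
        ip_adj t (M-2) k (by omega) (by omega) (by omega) hk1 hk2,
        if_neg (show ¬(k = M) by omega), if_pos hc]
    ring
  · rw [ip_far t M k (by omega),
        ip_adj t (M-1) k (by omega) (by omega) (by omega) hk1 hk2,
        ip_eq t (M-2) k (by omega) (by omega) (by omega),
        if_neg (show ¬(k = M) by omega), if_neg (show ¬(k + 1 = M) by omega), if_pos hc]
    ring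
  · rw [ip_far t M k (by omega), ip_far t (M-1) k (by omega),
        ip_adj t (M-2) k (by omega) (by omega) (by omega) hk1 hk2,
        if_neg (show ¬(k = M) by omega), if_neg (show ¬(k + 1 = M) by omega),
        if_neg (show ¬(k + 2 = M) by omega), if_pos hc]
    ring
  · rw [ip_far t M k (by omega), ip_far t (M-1) k (by omega), ip_far t (M-2) k (by omega),
        if_neg (show ¬(k = M) by omega), if_neg (show ¬(k + 1 = M) by omega),
        if_neg (show ¬(k + 2 = M) by omega), if_neg (show ¬(k + 3 = M) by omega)]
    ring

lemma Xi_mem {t i : ℕ} (ht : t ≠ 0) (h : i ∈ Xi t) :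
    Odd i ∧ 1 ≤ i ∧ i ≤ 2^(t+1)-1 := by
  simp only [Xi, if_neg ht, Finset.mem_filter, Idx, Finset.mem_Icc] at h
  tauto

/-! ### Orthogonality to the previous level -/

lemma key_orth (t i m : ℕ) (ht : t ≠ 0) (hi : i ∈ Xi t) (hm1 : 1 ≤ m) (hm2 : m ≤ 2^t - 1) :
    ∫ x in (0:ℝ)..1, prew t i x * hat (t-1) m x = 0 := by
  obtain ⟨t₀, rfl⟩ : ∃ t₀, t = t₀ + 1 := ⟨t-1, by omega⟩
  obtain ⟨m₀, rfl⟩ : ∃ m₀, m = m₀ + 1 := ⟨m-1, by omega⟩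
  simp only [Nat.add_sub_cancel]
  set t := t₀ + 1 with htdef
  have e : ∀ x, prew t i x * hat t₀ (m₀+1) x
      = 1/2 * (prew t i x * hat t (2*m₀+1) x) + prew t i x * hat t (2*m₀+2) x
        + 1/2 * (prew t i x * hat t (2*m₀+3) x) := by
    intro x; rw [hat_ref]; ring
  simp only [e]
  have i1 := (ph_ii t i t (2*m₀+1)).const_mul (1/2 : ℝ)
  have i2 := ph_ii t i t (2*m₀+2)
  have i3 := (ph_ii t i t (2*m₀+3)).const_mul (1/2 : ℝ)
  rw [integral_add (i1.add i2) i3, integral_add i1 i2]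
  simp only [intervalIntegral.integral_const_mul]
  have hp : 2^(t+1) = 2*2^(t₀+1) := by rw [pow_succ]; ring
  have hp2 : 2 ≤ 2^(t₀+1) := by
    calc 2 = 2^1 := rfl
    _ ≤ 2^(t₀+1) := Nat.pow_le_pow_right (by norm_num) (by omega)
  obtain ⟨hodd, hi1, hi2⟩ := Xi_mem ht hi
  obtain ⟨c, rfl⟩ := hodd
  have hk1 : (1:ℕ) ≤ 2*m₀+1 := by omega
  have hk2 : 2*m₀+3 ≤ 2^(t+1)-1 := by omega
  by_cases hI1 : 2*c+1 = 1
  · have hc0 : c = 0 := by omega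
    subst hc0
    rw [show 2*0+1 = 1 from rfl]
    rw [prew_hat_left t (2*m₀+1) ht (by omega) (by omega),
        prew_hat_left t (2*m₀+2) ht (by omega) (by omega),
        prew_hat_left t (2*m₀+3) ht (by omega) (by omega)]
    rcases (show m₀ = 0 ∨ m₀ = 1 ∨ 2 ≤ m₀ by omega) with hm|hm|hm
    · subst hm; norm_num; ring
    · subst hm; norm_num; ring
    · rw [if_neg (show ¬(2*m₀+1 = 1) by omega), if_neg (show ¬(2*m₀+1 = 2) by omega),
          if_neg (show ¬(2*m₀+1 = 3) by omega), if_neg (show ¬(2*m₀+1 = 4) by omega),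
          if_neg (show ¬(2*m₀+2 = 1) by omega), if_neg (show ¬(2*m₀+2 = 2) by omega),
          if_neg (show ¬(2*m₀+2 = 3) by omega), if_neg (show ¬(2*m₀+2 = 4) by omega),
          if_neg (show ¬(2*m₀+3 = 1) by omega), if_neg (show ¬(2*m₀+3 = 2) by omega),
          if_neg (show ¬(2*m₀+3 = 3) by omega), if_neg (show ¬(2*m₀+3 = 4) by omega)]
      ring
  by_cases hIM : 2*c+1 = 2^(t+1)-1
  · rw [hIM]
    rw [prew_hat_right t (2*m₀+1) ht (by omega) (by omega),
        prew_hat_right t (2*m₀+2) ht (by omega) (by omega),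
        prew_hat_right t (2*m₀+3) ht (by omega) (by omega)]
    rcases (show 2*m₀+3 = 2^(t+1)-1 ∨ 2*m₀+5 = 2^(t+1)-1 ∨ 2*m₀+7 ≤ 2^(t+1)-1 by omega)
      with hm|hm|hm
    · rw [if_neg (show ¬(2*m₀+1 = 2^(t+1)-1) by omega),
          if_neg (show ¬(2*m₀+1+1 = 2^(t+1)-1) by omega),
          if_pos (show 2*m₀+1+2 = 2^(t+1)-1 by omega),
          if_neg (show ¬(2*m₀+2 = 2^(t+1)-1) by omega),
          if_pos (show 2*m₀+2+1 = 2^(t+1)-1 by omega),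
          if_pos (show 2*m₀+3 = 2^(t+1)-1 by omega)]
      ring
    · rw [if_neg (show ¬(2*m₀+1 = 2^(t+1)-1) by omega),
          if_neg (show ¬(2*m₀+1+1 = 2^(t+1)-1) by omega),
          if_neg (show ¬(2*m₀+1+2 = 2^(t+1)-1) by omega),
          if_neg (show ¬(2*m₀+1+3 = 2^(t+1)-1) by omega),
          if_neg (show ¬(2*m₀+2 = 2^(t+1)-1) by omega),
          if_neg (show ¬(2*m₀+2+1 = 2^(t+1)-1) by omega),
          if_neg (show ¬(2*m₀+2+2 = 2^(t+1)-1) by omega),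
          if_pos (show 2*m₀+2+3 = 2^(t+1)-1 by omega),
          if_neg (show ¬(2*m₀+3 = 2^(t+1)-1) by omega),
          if_neg (show ¬(2*m₀+3+1 = 2^(t+1)-1) by omega),
          if_pos (show 2*m₀+3+2 = 2^(t+1)-1 by omega)]
      ring
    · rw [if_neg (show ¬(2*m₀+1 = 2^(t+1)-1) by omega),
          if_neg (show ¬(2*m₀+1+1 = 2^(t+1)-1) by omega),
          if_neg (show ¬(2*m₀+1+2 = 2^(t+1)-1) by omega),
          if_neg (show ¬(2*m₀+1+3 = 2^(t+1)-1) by omega),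
          if_neg (show ¬(2*m₀+2 = 2^(t+1)-1) by omega),
          if_neg (show ¬(2*m₀+2+1 = 2^(t+1)-1) by omega),
          if_neg (show ¬(2*m₀+2+2 = 2^(t+1)-1) by omega),
          if_neg (show ¬(2*m₀+2+3 = 2^(t+1)-1) by omega),
          if_neg (show ¬(2*m₀+3 = 2^(t+1)-1) by omega),
          if_neg (show ¬(2*m₀+3+1 = 2^(t+1)-1) by omega),
          if_neg (show ¬(2*m₀+3+2 = 2^(t+1)-1) by omega),
          if_neg (show ¬(2*m₀+3+3 = 2^(t+1)-1) by omega)]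
      ring
  · rw [prew_hat_mid t (2*c+1) (2*m₀+1) ht hI1 hIM (by omega) (by omega) (by omega) (by omega),
        prew_hat_mid t (2*c+1) (2*m₀+2) ht hI1 hIM (by omega) (by omega) (by omega) (by omega),
        prew_hat_mid t (2*c+1) (2*m₀+3) ht hI1 hIM (by omega) (by omega) (by omega) (by omega)]
    rcases (show 2*c+1+4 ≤ 2*m₀+1 ∨ 2*c+1+3 = 2*m₀+2 ∨ 2*c+1 = 2*m₀+1 ∨ 2*c+1 = 2*m₀+3
        ∨ 2*c+1 = 2*m₀+5 ∨ 2*m₀+7 ≤ 2*c+1 by omega) with hm|hm|hm|hm|hm|hm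
    · rw [if_neg (show ¬(2*m₀+1 = 2*c+1) by omega),
          if_neg (show ¬(2*m₀+1+1 = 2*c+1 ∨ 2*c+1+1 = 2*m₀+1) by omega),
          if_neg (show ¬(2*m₀+1+2 = 2*c+1 ∨ 2*c+1+2 = 2*m₀+1) by omega),
          if_neg (show ¬(2*m₀+1+3 = 2*c+1 ∨ 2*c+1+3 = 2*m₀+1) by omega),
          if_neg (show ¬(2*m₀+2 = 2*c+1) by omega),
          if_neg (show ¬(2*m₀+2+1 = 2*c+1 ∨ 2*c+1+1 = 2*m₀+2) by omega),
          if_neg (show ¬(2*m₀+2+2 = 2*c+1 ∨ 2*c+1+2 = 2*m₀+2) by omega),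
          if_neg (show ¬(2*m₀+2+3 = 2*c+1 ∨ 2*c+1+3 = 2*m₀+2) by omega),
          if_neg (show ¬(2*m₀+3 = 2*c+1) by omega),
          if_neg (show ¬(2*m₀+3+1 = 2*c+1 ∨ 2*c+1+1 = 2*m₀+3) by omega),
          if_neg (show ¬(2*m₀+3+2 = 2*c+1 ∨ 2*c+1+2 = 2*m₀+3) by omega),
          if_neg (show ¬(2*m₀+3+3 = 2*c+1 ∨ 2*c+1+3 = 2*m₀+3) by omega)]
      ring
    · rw [if_neg (show ¬(2*m₀+1 = 2*c+1) by omega),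
          if_neg (show ¬(2*m₀+1+1 = 2*c+1 ∨ 2*c+1+1 = 2*m₀+1) by omega),
          if_pos (show 2*m₀+1+2 = 2*c+1 ∨ 2*c+1+2 = 2*m₀+1 from Or.inr (by omega)),
          if_neg (show ¬(2*m₀+2 = 2*c+1) by omega),
          if_neg (show ¬(2*m₀+2+1 = 2*c+1 ∨ 2*c+1+1 = 2*m₀+2) by omega),
          if_neg (show ¬(2*m₀+2+2 = 2*c+1 ∨ 2*c+1+2 = 2*m₀+2) by omega),
          if_pos (show 2*m₀+2+3 = 2*c+1 ∨ 2*c+1+3 = 2*m₀+2 from Or.inr (by omega)),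
          if_neg (show ¬(2*m₀+3 = 2*c+1) by omega),
          if_neg (show ¬(2*m₀+3+1 = 2*c+1 ∨ 2*c+1+1 = 2*m₀+3) by omega),
          if_neg (show ¬(2*m₀+3+2 = 2*c+1 ∨ 2*c+1+2 = 2*m₀+3) by omega),
          if_neg (show ¬(2*m₀+3+3 = 2*c+1 ∨ 2*c+1+3 = 2*m₀+3) by omega)]
      ring
    · rw [if_pos (show 2*m₀+1 = 2*c+1 from by omega),
          if_neg (show ¬(2*m₀+2 = 2*c+1) by omega),
          if_pos (show 2*m₀+2+1 = 2*c+1 ∨ 2*c+1+1 = 2*m₀+2 from Or.inr (by omega)),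
          if_neg (show ¬(2*m₀+3 = 2*c+1) by omega),
          if_neg (show ¬(2*m₀+3+1 = 2*c+1 ∨ 2*c+1+1 = 2*m₀+3) by omega),
          if_pos (show 2*m₀+3+2 = 2*c+1 ∨ 2*c+1+2 = 2*m₀+3 from Or.inr (by omega))]
      ring
    · rw [if_neg (show ¬(2*m₀+1 = 2*c+1) by omega),
          if_neg (show ¬(2*m₀+1+1 = 2*c+1 ∨ 2*c+1+1 = 2*m₀+1) by omega),
          if_pos (show 2*m₀+1+2 = 2*c+1 ∨ 2*c+1+2 = 2*m₀+1 from Or.inl (by omega)),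
          if_neg (show ¬(2*m₀+2 = 2*c+1) by omega),
          if_pos (show 2*m₀+2+1 = 2*c+1 ∨ 2*c+1+1 = 2*m₀+2 from Or.inl (by omega)),
          if_pos (show 2*m₀+3 = 2*c+1 from by omega)]
      ring
    · rw [if_neg (show ¬(2*m₀+1 = 2*c+1) by omega),
          if_neg (show ¬(2*m₀+1+1 = 2*c+1 ∨ 2*c+1+1 = 2*m₀+1) by omega),
          if_neg (show ¬(2*m₀+1+2 = 2*c+1 ∨ 2*c+1+2 = 2*m₀+1) by omega),
          if_neg (show ¬(2*m₀+1+3 = 2*c+1 ∨ 2*c+1+3 = 2*m₀+1) by omega),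
          if_neg (show ¬(2*m₀+2 = 2*c+1) by omega),
          if_neg (show ¬(2*m₀+2+1 = 2*c+1 ∨ 2*c+1+1 = 2*m₀+2) by omega),
          if_neg (show ¬(2*m₀+2+2 = 2*c+1 ∨ 2*c+1+2 = 2*m₀+2) by omega),
          if_pos (show 2*m₀+2+3 = 2*c+1 ∨ 2*c+1+3 = 2*m₀+2 from Or.inl (by omega)),
          if_neg (show ¬(2*m₀+3 = 2*c+1) by omega),
          if_neg (show ¬(2*m₀+3+1 = 2*c+1 ∨ 2*c+1+1 = 2*m₀+3) by omega),
          if_pos (show 2*m₀+3+2 = 2*c+1 ∨ 2*c+1+2 = 2*m₀+3 from Or.inl (by omega))]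
      ring
    · rw [if_neg (show ¬(2*m₀+1 = 2*c+1) by omega),
          if_neg (show ¬(2*m₀+1+1 = 2*c+1 ∨ 2*c+1+1 = 2*m₀+1) by omega),
          if_neg (show ¬(2*m₀+1+2 = 2*c+1 ∨ 2*c+1+2 = 2*m₀+1) by omega),
          if_neg (show ¬(2*m₀+1+3 = 2*c+1 ∨ 2*c+1+3 = 2*m₀+1) by omega),
          if_neg (show ¬(2*m₀+2 = 2*c+1) by omega),
          if_neg (show ¬(2*m₀+2+1 = 2*c+1 ∨ 2*c+1+1 = 2*m₀+2) by omega),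
          if_neg (show ¬(2*m₀+2+2 = 2*c+1 ∨ 2*c+1+2 = 2*m₀+2) by omega),
          if_neg (show ¬(2*m₀+2+3 = 2*c+1 ∨ 2*c+1+3 = 2*m₀+2) by omega),
          if_neg (show ¬(2*m₀+3 = 2*c+1) by omega),
          if_neg (show ¬(2*m₀+3+1 = 2*c+1 ∨ 2*c+1+1 = 2*m₀+3) by omega),
          if_neg (show ¬(2*m₀+3+2 = 2*c+1 ∨ 2*c+1+2 = 2*m₀+3) by omega),
          if_neg (show ¬(2*m₀+3+3 = 2*c+1 ∨ 2*c+1+3 = 2*m₀+3) by omega)]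
      ring

/-! ### Orthogonality to all coarser levels -/

lemma coarse_orth (t i : ℕ) (ht : t ≠ 0) (hi : i ∈ Xi t) :
    ∀ d s j, s + 1 + d = t → 1 ≤ j → j ≤ 2^(s+1) - 1 →
      ∫ x in (0:ℝ)..1, prew t i x * hat s j x = 0 := by
  intro d
  induction d with
  | zero =>
    intro s j hs hj1 hj2
    have hst : s = t - 1 := by omega
    have hst2 : s + 1 = t := by omega
    rw [hst2] at hj2
    subst hst
    exact key_orth t i j ht hi hj1 hj2
  | succ d ih =>
    intro s j hs hj1 hj2
    obtain ⟨j₀, rfl⟩ : ∃ j₀, j = j₀ + 1 := ⟨j-1, by omega⟩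
    have hp : 2^(s+1+1) = 2*2^(s+1) := by rw [pow_succ]; ring
    have e : ∀ x, prew t i x * hat s (j₀+1) x
        = 1/2 * (prew t i x * hat (s+1) (2*j₀+1) x) + prew t i x * hat (s+1) (2*j₀+2) x
          + 1/2 * (prew t i x * hat (s+1) (2*j₀+3) x) := by
      intro x; rw [hat_ref]; ring
    simp only [e]
    have i1 := (ph_ii t i (s+1) (2*j₀+1)).const_mul (1/2 : ℝ)
    have i2 := ph_ii t i (s+1) (2*j₀+2)
    have i3 := (ph_ii t i (s+1) (2*j₀+3)).const_mul (1/2 : ℝ)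
    rw [integral_add (i1.add i2) i3, integral_add i1 i2]
    simp only [intervalIntegral.integral_const_mul]
    rw [ih (s+1) (2*j₀+1) (by omega) (by omega) (by omega),
        ih (s+1) (2*j₀+2) (by omega) (by omega) (by omega),
        ih (s+1) (2*j₀+3) (by omega) (by omega) (by omega)]
    ring

lemma orth_lt (t t' i i' : ℕ) (h : t' < t) (hi : i ∈ Xi t) (hi' : i' ∈ Xi t') :
    ∫ x in (0:ℝ)..1, prew t i x * prew t' i' x = 0 := by
  have ht : t ≠ 0 := by omega
  have C : ∀ j, 1 ≤ j → j ≤ 2^(t'+1)-1 →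
      ∫ x in (0:ℝ)..1, prew t i x * hat t' j x = 0 :=
    fun j h1 h2 => coarse_orth t i ht hi (t - (t'+1)) t' j (by omega) h1 h2
  by_cases ht' : t' = 0
  · subst ht'
    have hi'1 : i' = 1 := by simpa [Xi] using hi'
    subst hi'1
    have e : ∀ x, prew t i x * prew 0 1 x = prew t i x * hat 0 1 x := by
      intro x; rw [show prew 0 1 x = hat 0 1 x from by unfold prew; rw [if_pos rfl]]
    simp only [e]
    exact C 1 le_rfl (by norm_num)
  · obtain ⟨ho, h1, h2⟩ := Xi_mem ht' hi'
    have hM4 : 4 ≤ 2^(t'+1) := by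
      calc 4 = 2^2 := rfl
      _ ≤ 2^(t'+1) := Nat.pow_le_pow_right (by norm_num) (by omega)
    have hp : 2^(t'+1) = 2*2^t' := by rw [pow_succ]; ring
    have hp2 : 2 ≤ 2^t' := by
      calc 2 = 2^1 := rfl
      _ ≤ 2^t' := Nat.pow_le_pow_right (by norm_num) (by omega)
    by_cases hI1 : i' = 1
    · subst hI1
      have e : ∀ x, prew t i x * prew t' 1 x
          = 9/10 * (prew t i x * hat t' 1 x) - 3/5 * (prew t i x * hat t' 2 x)
            + 1/10 * (prew t i x * hat t' 3 x) := by
        intro x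
        rw [show prew t' 1 x = 9/10 * hat t' 1 x - 3/5 * hat t' 2 x + 1/10 * hat t' 3 x
          from by unfold prew; rw [if_neg ht', if_pos rfl]]
        ring
      simp only [e]
      have i1 := (ph_ii t i t' 1).const_mul (9/10 : ℝ)
      have i2 := (ph_ii t i t' 2).const_mul (3/5 : ℝ)
      have i3 := (ph_ii t i t' 3).const_mul (1/10 : ℝ)
      rw [integral_add (i1.sub i2) i3, integral_sub i1 i2]
      simp only [intervalIntegral.integral_const_mul]
      rw [C 1 (by omega) (by omega), C 2 (by omega) (by omega), C 3 (by omega) (by omega)]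
      ring
    · by_cases hIM : i' = 2^(t'+1)-1
      · subst hIM
        set M := 2^(t'+1)-1 with hMdef
        have e : ∀ x, prew t i x * prew t' M x
            = 9/10 * (prew t i x * hat t' M x) - 3/5 * (prew t i x * hat t' (M-1) x)
              + 1/10 * (prew t i x * hat t' (M-2) x) := by
          intro x
          rw [show prew t' M x = 9/10 * hat t' M x - 3/5 * hat t' (M-1) x + 1/10 * hat t' (M-2) x
            from by unfold prew; rw [if_neg ht', if_neg (show ¬(M = 1) by omega), if_pos rfl]]
          ring
        simp only [e]
        have i1 := (ph_ii t i t' M).const_mul (9/10 : ℝ)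
        have i2 := (ph_ii t i t' (M-1)).const_mul (3/5 : ℝ)
        have i3 := (ph_ii t i t' (M-2)).const_mul (1/10 : ℝ)
        rw [integral_add (i1.sub i2) i3, integral_sub i1 i2]
        simp only [intervalIntegral.integral_const_mul]
        rw [C M (by omega) (by omega), C (M-1) (by omega) (by omega),
            C (M-2) (by omega) (by omega)]
        ring
      · have hi3 : 3 ≤ i' := by
          obtain ⟨c, rfl⟩ := ho; omega
        have hiM2 : i' + 2 ≤ 2^(t'+1)-1 := by
          obtain ⟨c, rfl⟩ := ho; omega
        have e : ∀ x, prew t i x * prew t' i' x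
            = (prew t i x * hat t' i' x)
              - 3/5 * (prew t i x * hat t' (i'+1) x) - 3/5 * (prew t i x * hat t' (i'-1) x)
              + 1/10 * (prew t i x * hat t' (i'+2) x) + 1/10 * (prew t i x * hat t' (i'-2) x) := by
          intro x
          rw [show prew t' i' x = hat t' i' x - 3/5 * (hat t' (i'+1) x + hat t' (i'-1) x)
              + 1/10 * (hat t' (i'+2) x + hat t' (i'-2) x)
            from by unfold prew; rw [if_neg ht', if_neg hI1, if_neg hIM]]
          ring
        simp only [e]
        have i1 := ph_ii t i t' i'
        have i2 := (ph_ii t i t' (i'+1)).const_mul (3/5 : ℝ)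
        have i3 := (ph_ii t i t' (i'-1)).const_mul (3/5 : ℝ)
        have i4 := (ph_ii t i t' (i'+2)).const_mul (1/10 : ℝ)
        have i5 := (ph_ii t i t' (i'-2)).const_mul (1/10 : ℝ)
        rw [integral_add ((((i1.sub i2).sub i3).add i4)) i5,
            integral_add (((i1.sub i2).sub i3)) i4,
            integral_sub (i1.sub i2) i3,
            integral_sub i1 i2]
        simp only [intervalIntegral.integral_const_mul]
        rw [C i' (by omega) (by omega), C (i'+1) (by omega) (by omega),
            C (i'-1) (by omega) (by omega), C (i'+2) (by omega) (by omega),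
            C (i'-2) (by omega) (by omega)]
        ring

/-- Pre-wavelets of distinct levels are L²-orthogonal on `[0,1]`. -/
theorem prewavelet_level_orth (t t' i i' : ℕ) (h : t ≠ t')
    (hi : i ∈ Xi t) (hi' : i' ∈ Xi t') :
    ∫ x in (0:ℝ)..1, prew t i x * prew t' i' x = 0 := by
  rcases h.lt_or_gt with hlt|hlt
  · rw [ip_comm]
    exact orth_lt t' t i' i hlt hi' hi
  · exact orth_lt t t' i i' hlt hi hi'
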